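/- Let φ̃(k₁,k₂) = √(3 + 2cos k₁ + 2cos k₂ + 2cos(k₁−k₂)) with φ̃(k₁,k₂) ≠ 0. Then the Hessian determinant of φ̃ vanishes at (k₁,k₂) if and only if α̃₁(k₁,k₂) = 0 or α̃₂(k₁,k₂) = 0 or α̃₁₂(k₁,k₂) = 0, where α̃₁ = 1+cos k₂+cos(k₁−k₂), α̃₂ = 1+cos k₁+cos(k₁−k₂), α̃₁₂ = 1+cos k₁+cos k₂. -/

import Mathlib

open Real Filter

noncomputable def phiT (k₁ k₂ : ℝ) : ℝ :=
  Real.sqrt (3 + 2 * Real.cos k₁ + 2 * Real.cos k₂ + 2 * Real.cos (k₁ - k₂))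

noncomputable def Gt (k₁ k₂ : ℝ) : ℝ :=
  3 + 2 * Real.cos k₁ + 2 * Real.cos k₂ + 2 * Real.cos (k₁ - k₂)

lemma phiT_eq (k₁ k₂ : ℝ) : phiT k₁ k₂ = Real.sqrt (Gt k₁ k₂) := rfl

lemma Gt_nonneg (k₁ k₂ : ℝ) : 0 ≤ Gt k₁ k₂ := by
  have h1 := Real.sin_sq_add_cos_sq k₁
  have h2 := Real.sin_sq_add_cos_sq k₂
  have h3 := Real.cos_sub k₁ k₂
  unfold Gt
  nlinarith [sq_nonneg (1 + Real.cos k₁ + Real.cos k₂), sq_nonneg (Real.sin k₁ + Real.sin k₂)]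

lemma hDG1 (k₂ x : ℝ) :
    HasDerivAt (fun a => Gt a k₂) (-2 * Real.sin x - 2 * Real.sin (x - k₂)) x := by
  have h1 := (Real.hasDerivAt_cos x).const_mul 2
  have h2 := ((Real.hasDerivAt_cos (x - k₂)).comp x ((hasDerivAt_id x).sub_const k₂)).const_mul 2
  have h := ((h1.const_add 3).add_const (2 * Real.cos k₂)).add h2
  unfold Gt
  refine h.congr_deriv ?_
  ring

lemma hDG2 (k₁ x : ℝ) :
    HasDerivAt (fun b => Gt k₁ b) (-2 * Real.sin x + 2 * Real.sin (k₁ - x)) x := by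
  have h1 := (Real.hasDerivAt_cos x).const_mul 2
  have h2 := ((Real.hasDerivAt_cos (k₁ - x)).comp x ((hasDerivAt_id x).const_sub k₁)).const_mul 2
  have h := ((h1.const_add (3 + 2 * Real.cos k₁)).add h2)
  unfold Gt
  refine h.congr_deriv ?_
  ring

lemma hDphi1 (k₂ x : ℝ) (hx : 0 < Gt x k₂) :
    HasDerivAt (fun a => phiT a k₂)
      ((-2 * Real.sin x - 2 * Real.sin (x - k₂)) / (2 * Real.sqrt (Gt x k₂))) x := by
  have h := (Real.hasDerivAt_sqrt hx.ne').comp x (hDG1 k₂ x)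
  refine h.congr_deriv ?_
  ring

lemma hDphi2 (k₁ x : ℝ) (hx : 0 < Gt k₁ x) :
    HasDerivAt (fun b => phiT k₁ b)
      ((-2 * Real.sin x + 2 * Real.sin (k₁ - x)) / (2 * Real.sqrt (Gt k₁ x))) x := by
  have h := (Real.hasDerivAt_sqrt hx.ne').comp x (hDG2 k₁ x)
  refine h.congr_deriv ?_
  ring

theorem stmt_6 (k₁ k₂ : ℝ) (h : phiT k₁ k₂ ≠ 0) :
    ((deriv (fun x => deriv (fun y => phiT y k₂) x) k₁) *
        (deriv (fun x => deriv (fun y => phiT k₁ y) x) k₂) -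
      (deriv (fun x => deriv (fun y => phiT x y) k₂) k₁) ^ 2 = 0) ↔
      (1 + Real.cos k₂ + Real.cos (k₁ - k₂) = 0 ∨ 1 + Real.cos k₁ + Real.cos (k₁ - k₂) = 0 ∨
        1 + Real.cos k₁ + Real.cos k₂ = 0) := by
  have hpos : 0 < Gt k₁ k₂ := by
    rcases (Gt_nonneg k₁ k₂).lt_or_eq with h' | h'
    · exact h'
    · exact absurd (by rw [phiT_eq, ← h', Real.sqrt_zero]) h
  set s := Real.sqrt (Gt k₁ k₂) with hs_def
  have hs : 0 < s := Real.sqrt_pos.mpr hpos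
  have hs2 : s ^ 2 = Gt k₁ k₂ := Real.sq_sqrt hpos.le
  have hev1 : ∀ᶠ x in nhds k₁, 0 < Gt x k₂ := by
    have hc : ContinuousAt (fun a => Gt a k₂) k₁ := by unfold Gt; fun_prop
    exact hc.eventually (eventually_gt_nhds hpos)
  have hev2 : ∀ᶠ x in nhds k₂, 0 < Gt k₁ x := by
    have hc : ContinuousAt (fun b => Gt k₁ b) k₂ := by unfold Gt; fun_prop
    exact hc.eventually (eventually_gt_nhds hpos)
  -- first second derivative
  set V11 : ℝ := (-2 * Real.cos k₁ - 2 * Real.cos (k₁ - k₂)) / (2 * s)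
      - (-2 * Real.sin k₁ - 2 * Real.sin (k₁ - k₂)) ^ 2 / (4 * s ^ 3) with hV11
  set V22 : ℝ := (-2 * Real.cos k₂ - 2 * Real.cos (k₁ - k₂)) / (2 * s)
      - (-2 * Real.sin k₂ + 2 * Real.sin (k₁ - k₂)) ^ 2 / (4 * s ^ 3) with hV22
  set V12 : ℝ := (2 * Real.cos (k₁ - k₂)) / (2 * s)
      - (-2 * Real.sin k₂ + 2 * Real.sin (k₁ - k₂)) * (-2 * Real.sin k₁ - 2 * Real.sin (k₁ - k₂))
        / (4 * s ^ 3) with hV12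
  have hDen1 : HasDerivAt (fun x : ℝ => 2 * Real.sqrt (Gt x k₂))
      ((-2 * Real.sin k₁ - 2 * Real.sin (k₁ - k₂)) / s) k₁ := by
    have := (hDphi1 k₂ k₁ hpos).const_mul 2
    have he : (fun x : ℝ => 2 * phiT x k₂) = fun x : ℝ => 2 * Real.sqrt (Gt x k₂) := rfl
    rw [he] at this
    refine this.congr_deriv ?_
    rw [← hs_def]
    field_simp
  have hDen2 : HasDerivAt (fun x : ℝ => 2 * Real.sqrt (Gt k₁ x))
      ((-2 * Real.sin k₂ + 2 * Real.sin (k₁ - k₂)) / s) k₂ := by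
    have := (hDphi2 k₁ k₂ hpos).const_mul 2
    have he : (fun x : ℝ => 2 * phiT k₁ x) = fun x : ℝ => 2 * Real.sqrt (Gt k₁ x) := rfl
    rw [he] at this
    refine this.congr_deriv ?_
    rw [← hs_def]
    field_simp
  have hden_ne : (2 : ℝ) * Real.sqrt (Gt k₁ k₂) ≠ 0 := by positivity
  have D11 : deriv (fun x => deriv (fun y => phiT y k₂) x) k₁ = V11 := by
    have E1 : (fun x => deriv (fun y => phiT y k₂) x) =ᶠ[nhds k₁]
        fun x => (-2 * Real.sin x - 2 * Real.sin (x - k₂)) / (2 * Real.sqrt (Gt x k₂)) := by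
      filter_upwards [hev1] with x hx
      exact (hDphi1 k₂ x hx).deriv
    have hN : HasDerivAt (fun x : ℝ => -2 * Real.sin x - 2 * Real.sin (x - k₂))
        (-2 * Real.cos k₁ - 2 * Real.cos (k₁ - k₂)) k₁ := by
      have h1 := (Real.hasDerivAt_sin k₁).const_mul (-2)
      have h2 := ((Real.hasDerivAt_sin (k₁ - k₂)).comp k₁
        ((hasDerivAt_id k₁).sub_const k₂)).const_mul 2
      have := h1.sub h2
      simp only [Function.comp_def] at this
      refine this.congr_deriv ?_
      ring
    have hq := hN.div hDen1 hden_ne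
    simp only [Pi.div_def] at hq
    rw [E1.deriv_eq, hq.deriv, ← hs_def, hV11]
    field_simp
    ring
  have D22 : deriv (fun x => deriv (fun y => phiT k₁ y) x) k₂ = V22 := by
    have E2 : (fun x => deriv (fun y => phiT k₁ y) x) =ᶠ[nhds k₂]
        fun x => (-2 * Real.sin x + 2 * Real.sin (k₁ - x)) / (2 * Real.sqrt (Gt k₁ x)) := by
      filter_upwards [hev2] with x hx
      exact (hDphi2 k₁ x hx).deriv
    have hN : HasDerivAt (fun x : ℝ => -2 * Real.sin x + 2 * Real.sin (k₁ - x))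
        (-2 * Real.cos k₂ - 2 * Real.cos (k₁ - k₂)) k₂ := by
      have h1 := (Real.hasDerivAt_sin k₂).const_mul (-2)
      have h2 := ((Real.hasDerivAt_sin (k₁ - k₂)).comp k₂
        ((hasDerivAt_id k₂).const_sub k₁)).const_mul 2
      have := h1.add h2
      simp only [Function.comp_def] at this
      refine this.congr_deriv ?_
      ring
    have hq := hN.div hDen2 hden_ne
    simp only [Pi.div_def] at hq
    rw [E2.deriv_eq, hq.deriv, ← hs_def, hV22]
    field_simp
    ring
  have D12 : deriv (fun x => deriv (fun y => phiT x y) k₂) k₁ = V12 := by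
    have E3 : (fun x => deriv (fun y => phiT x y) k₂) =ᶠ[nhds k₁]
        fun x => (-2 * Real.sin k₂ + 2 * Real.sin (x - k₂)) / (2 * Real.sqrt (Gt x k₂)) := by
      filter_upwards [hev1] with x hx
      exact (hDphi2 x k₂ hx).deriv
    have hN : HasDerivAt (fun x : ℝ => -2 * Real.sin k₂ + 2 * Real.sin (x - k₂))
        (2 * Real.cos (k₁ - k₂)) k₁ := by
      have h2 := ((Real.hasDerivAt_sin (k₁ - k₂)).comp k₁
        ((hasDerivAt_id k₁).sub_const k₂)).const_mul 2
      have := h2.const_add (-2 * Real.sin k₂)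
      simp only [Function.comp_def] at this
      refine this.congr_deriv ?_
      ring
    have hq := hN.div hDen1 hden_ne
    simp only [Pi.div_def] at hq
    rw [E3.deriv_eq, hq.deriv, ← hs_def, hV12]
    field_simp
    ring
  rw [D11, D22, D12]
  -- key algebraic identity
  have hs2' : s ^ 2 = 3 + 2 * Real.cos k₁ + 2 * Real.cos k₂
      + 2 * (Real.cos k₁ * Real.cos k₂ + Real.sin k₁ * Real.sin k₂) := by
    rw [hs2]; unfold Gt; rw [Real.cos_sub]
  have key : 16 * s ^ 8 * (V11 * V22 - V12 ^ 2) =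
      16 * s ^ 4 * ((1 + Real.cos k₂ + Real.cos (k₁ - k₂)) * (1 + Real.cos k₁ + Real.cos (k₁ - k₂))
        * (1 + Real.cos k₁ + Real.cos k₂)) := by
    have e11 : 4 * s ^ 4 * V11 = 2 * s ^ 3 * (-2 * Real.cos k₁ - 2 * Real.cos (k₁ - k₂))
        - s * (-2 * Real.sin k₁ - 2 * Real.sin (k₁ - k₂)) ^ 2 := by
      rw [hV11]; field_simp; ring
    have e22 : 4 * s ^ 4 * V22 = 2 * s ^ 3 * (-2 * Real.cos k₂ - 2 * Real.cos (k₁ - k₂))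
        - s * (-2 * Real.sin k₂ + 2 * Real.sin (k₁ - k₂)) ^ 2 := by
      rw [hV22]; field_simp; ring
    have e12 : 4 * s ^ 4 * V12 = 2 * s ^ 3 * (2 * Real.cos (k₁ - k₂))
        - s * ((-2 * Real.sin k₂ + 2 * Real.sin (k₁ - k₂)) * (-2 * Real.sin k₁ - 2 * Real.sin (k₁ - k₂))) := by
      rw [hV12]; field_simp; ring
    have hsplit : 16 * s ^ 8 * (V11 * V22 - V12 ^ 2)
        = (4 * s ^ 4 * V11) * (4 * s ^ 4 * V22) - (4 * s ^ 4 * V12) ^ 2 := by ring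
    rw [hsplit, e11, e22, e12, Real.cos_sub, Real.sin_sub]
    linear_combination ((-48) + (-16)*s^2 + (-128)*Real.cos k₂ + (-32)*Real.cos k₂*s^2 + (-112)*Real.cos k₂^2 + (-16)*Real.cos k₂^2*s^2 + (-32)*Real.cos k₂^3 + (-128)*Real.sin k₁*Real.sin k₂ + (-32)*Real.sin k₁*Real.sin k₂*s^2 + (48)*Real.sin k₁*Real.sin k₂^3 + (16)*Real.sin k₁*Real.sin k₂^3*s^2 + (-128)*Real.sin k₁*Real.cos k₂*Real.sin k₂ + (16)*Real.sin k₁*Real.cos k₂*Real.sin k₂*s^4 + (32)*Real.sin k₁*Real.cos k₂*Real.sin k₂^3 + (16)*Real.sin k₁*Real.cos k₂^2*Real.sin k₂ + (16)*Real.sin k₁*Real.cos k₂^2*Real.sin k₂*s^2 + (32)*Real.sin k₁*Real.cos k₂^3*Real.sin k₂ + (-16)*Real.sin k₁^2*Real.sin k₂^2 + (16)*Real.sin k₁^2*Real.sin k₂^2*s^2 + (32)*Real.sin k₁^2*Real.sin k₂^4 + (48)*Real.sin k₁^2*Real.cos k₂ + (16)*Real.sin k₁^2*Real.cos k₂*s^2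 + (80)*Real.sin k₁^2*Real.cos k₂*Real.sin k₂^2 + (16)*Real.sin k₁^2*Real.cos k₂*Real.sin k₂^2*s^2 + (128)*Real.sin k₁^2*Real.cos k₂^2 + (32)*Real.sin k₁^2*Real.cos k₂^2*s^2 + (64)*Real.sin k₁^2*Real.cos k₂^2*Real.sin k₂^2 + (112)*Real.sin k₁^2*Real.cos k₂^3 + (16)*Real.sin k₁^2*Real.cos k₂^3*s^2 + (32)*Real.sin k₁^2*Real.cos k₂^4 + (48)*Real.sin k₁^3*Real.sin k₂ + (16)*Real.sin k₁^3*Real.sin k₂*s^2 + (32)*Real.sin k₁^3*Real.sin k₂^3 + (64)*Real.sin k₁^3*Real.cos k₂*Real.sin k₂ + (32)*Real.sin k₁^3*Real.cos k₂*Real.sin k₂^3 + (64)*Real.sin k₁^3*Real.cos k₂^2*Real.sin k₂ + (32)*Real.sin k₁^3*Real.cos k₂^3*Real.sin k₂ + (32)*Real.sin k₁^4*Real.sin k₂^2 + (-128)*Real.cos k₁ + (-32)*Real.cos k₁*s^2 + (48)*Real.cos k₁*Real.sin k₂^2 + (16)*Real.cos k₁*Real.sin k₂^2*s^2 + (-256)*Real.cos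 k₁*Real.cos k₂ + (-32)*Real.cos k₁*Real.cos k₂*s^2 + (16)*Real.cos k₁*Real.cos k₂*s^4 + (80)*Real.cos k₁*Real.cos k₂*Real.sin k₂^2 + (16)*Real.cos k₁*Real.cos k₂*Real.sin k₂^2*s^2 + (-112)*Real.cos k₁*Real.cos k₂^2 + (16)*Real.cos k₁*Real.cos k₂^2*s^2 + (16)*Real.cos k₁*Real.cos k₂^2*s^4 + (32)*Real.cos k₁*Real.cos k₂^2*Real.sin k₂^2 + (48)*Real.cos k₁*Real.cos k₂^3 + (16)*Real.cos k₁*Real.cos k₂^3*s^2 + (32)*Real.cos k₁*Real.cos k₂^4 + (-128)*Real.cos k₁*Real.sin k₁*Real.sin k₂ + (16)*Real.cos k₁*Real.sin k₁*Real.sin k₂*s^4 + (64)*Real.cos k₁*Real.sin k₁*Real.sin k₂^3 + (-128)*Real.cos k₁*Real.sin k₁*Real.cos k₂*Real.sin k₂ + (64)*Real.cos k₁*Real.sin k₁*Real.cos k₂*Real.sin k₂^3 + (64)*Real.cos k₁*Real.sin k₁*Real.cos k₂^2*Real.sin k₂ + (64)*Real.cos k₁*Real.sin k₁*Real.cos k₂^3*Real.sin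 k₂ + (80)*Real.cos k₁*Real.sin k₁^2*Real.sin k₂^2 + (16)*Real.cos k₁*Real.sin k₁^2*Real.sin k₂^2*s^2 + (80)*Real.cos k₁*Real.sin k₁^2*Real.cos k₂ + (16)*Real.cos k₁*Real.sin k₁^2*Real.cos k₂*s^2 + (96)*Real.cos k₁*Real.sin k₁^2*Real.cos k₂*Real.sin k₂^2 + (176)*Real.cos k₁*Real.sin k₁^2*Real.cos k₂^2 + (16)*Real.cos k₁*Real.sin k₁^2*Real.cos k₂^2*s^2 + (32)*Real.cos k₁*Real.sin k₁^2*Real.cos k₂^2*Real.sin k₂^2 + (128)*Real.cos k₁*Real.sin k₁^2*Real.cos k₂^3 + (32)*Real.cos k₁*Real.sin k₁^2*Real.cos k₂^4 + (32)*Real.cos k₁*Real.sin k₁^3*Real.sin k₂ + (32)*Real.cos k₁*Real.sin k₁^3*Real.sin k₂^3 + (64)*Real.cos k₁*Real.sin k₁^3*Real.cos k₂*Real.sin k₂ + (32)*Real.cos k₁*Real.sin k₁^3*Real.cos k₂^2*Real.sin k₂ + (-112)*Real.cos k₁^2 + (-16)*Real.cos k₁^2*s^2 + (128)*Real.cos k₁^2*Real.sin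 k₂^2 + (32)*Real.cos k₁^2*Real.sin k₂^2*s^2 + (-112)*Real.cos k₁^2*Real.cos k₂ + (16)*Real.cos k₁^2*Real.cos k₂*s^2 + (16)*Real.cos k₁^2*Real.cos k₂*s^4 + (176)*Real.cos k₁^2*Real.cos k₂*Real.sin k₂^2 + (16)*Real.cos k₁^2*Real.cos k₂*Real.sin k₂^2*s^2 + (144)*Real.cos k₁^2*Real.cos k₂^2 + (48)*Real.cos k₁^2*Real.cos k₂^2*s^2 + (64)*Real.cos k₁^2*Real.cos k₂^2*Real.sin k₂^2 + (208)*Real.cos k₁^2*Real.cos k₂^3 + (16)*Real.cos k₁^2*Real.cos k₂^3*s^2 + (64)*Real.cos k₁^2*Real.cos k₂^4 + (16)*Real.cos k₁^2*Real.sin k₁*Real.sin k₂ + (16)*Real.cos k₁^2*Real.sin k₁*Real.sin k₂*s^2 + (64)*Real.cos k₁^2*Real.sin k₁*Real.sin k₂^3 + (64)*Real.cos k₁^2*Real.sin k₁*Real.cos k₂*Real.sin k₂ + (32)*Real.cos k₁^2*Real.sin k₁*Real.cos k₂*Real.sin k₂^3 + (96)*Real.cos k₁^2*Real.sin k₁*Real.cos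 k₂^2*Real.sin k₂ + (32)*Real.cos k₁^2*Real.sin k₁*Real.cos k₂^3*Real.sin k₂ + (64)*Real.cos k₁^2*Real.sin k₁^2*Real.sin k₂^2 + (32)*Real.cos k₁^2*Real.sin k₁^2*Real.cos k₂ + (32)*Real.cos k₁^2*Real.sin k₁^2*Real.cos k₂*Real.sin k₂^2 + (64)*Real.cos k₁^2*Real.sin k₁^2*Real.cos k₂^2 + (32)*Real.cos k₁^2*Real.sin k₁^2*Real.cos k₂^3 + (-32)*Real.cos k₁^3 + (112)*Real.cos k₁^3*Real.sin k₂^2 + (16)*Real.cos k₁^3*Real.sin k₂^2*s^2 + (48)*Real.cos k₁^3*Real.cos k₂ + (16)*Real.cos k₁^3*Real.cos k₂*s^2 + (128)*Real.cos k₁^3*Real.cos k₂*Real.sin k₂^2 + (208)*Real.cos k₁^3*Real.cos k₂^2 + (16)*Real.cos k₁^3*Real.cos k₂^2*s^2 + (32)*Real.cos k₁^3*Real.cos k₂^2*Real.sin k₂^2 + (160)*Real.cos k₁^3*Real.cos k₂^3 + (32)*Real.cos k₁^3*Real.cos k₂^4 + (32)*Real.cos k₁^3*Real.sin k₁*Real.sin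 k₂ + (32)*Real.cos k₁^3*Real.sin k₁*Real.sin k₂^3 + (64)*Real.cos k₁^3*Real.sin k₁*Real.cos k₂*Real.sin k₂ + (32)*Real.cos k₁^3*Real.sin k₁*Real.cos k₂^2*Real.sin k₂ + (32)*Real.cos k₁^4*Real.sin k₂^2 + (32)*Real.cos k₁^4*Real.cos k₂ + (32)*Real.cos k₁^4*Real.cos k₂*Real.sin k₂^2 + (64)*Real.cos k₁^4*Real.cos k₂^2 + (32)*Real.cos k₁^4*Real.cos k₂^3) * hs2' + ((-112)*Real.sin k₂^2 + (256)*Real.sin k₂^4 + (144)*Real.cos k₂ + (144)*Real.cos k₂*Real.sin k₂^2 + (192)*Real.cos k₂*Real.sin k₂^4 + (480)*Real.cos k₂^2 + (512)*Real.cos k₂^2*Real.sin k₂^2 + (592)*Real.cos k₂^3 + (256)*Real.cos k₂^3*Real.sin k₂^2 + (320)*Real.cos k₂^4 + (64)*Real.cos k₂^5 + (144)*Real.sin k₁*Real.sin k₂ + (128)*Real.sin k₁*Real.sin k₂^3 + (64)*Real.sin k₁*Real.sin k₂^5 + (384)*Real.sin k₁*Real.cos k₂*Real.sin k₂ + (320)*Real.sin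 k₁*Real.cos k₂*Real.sin k₂^3 + (576)*Real.sin k₁*Real.cos k₂^2*Real.sin k₂ + (192)*Real.sin k₁*Real.cos k₂^2*Real.sin k₂^3 + (448)*Real.sin k₁*Real.cos k₂^3*Real.sin k₂ + (128)*Real.sin k₁*Real.cos k₂^4*Real.sin k₂ + (192)*Real.sin k₁^2*Real.sin k₂^2 + (64)*Real.sin k₁^2*Real.sin k₂^4 + (192)*Real.sin k₁^2*Real.cos k₂*Real.sin k₂^2 + (64)*Real.sin k₁^2*Real.cos k₂*Real.sin k₂^4 + (128)*Real.sin k₁^2*Real.cos k₂^2*Real.sin k₂^2 + (64)*Real.sin k₁^2*Real.cos k₂^3*Real.sin k₂^2 + (64)*Real.sin k₁^3*Real.sin k₂^3 + (80)*Real.cos k₁*Real.sin k₂^2 + (256)*Real.cos k₁*Real.sin k₂^4 + (336)*Real.cos k₁*Real.cos k₂ + (512)*Real.cos k₁*Real.cos k₂*Real.sin k₂^2 + (192)*Real.cos k₁*Real.cos k₂*Real.sin k₂^4 + (1040)*Real.cos k₁*Real.cos k₂^2 + (768)*Real.cos k₁*Real.cos k₂^2*Real.sin k₂^2 + (1216)*Real.cos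 k₁*Real.cos k₂^3 + (320)*Real.cos k₁*Real.cos k₂^3*Real.sin k₂^2 + (640)*Real.cos k₁*Real.cos k₂^4 + (128)*Real.cos k₁*Real.cos k₂^5 + (192)*Real.cos k₁*Real.sin k₁*Real.sin k₂ + (320)*Real.cos k₁*Real.sin k₁*Real.sin k₂^3 + (640)*Real.cos k₁*Real.sin k₁*Real.cos k₂*Real.sin k₂ + (384)*Real.cos k₁*Real.sin k₁*Real.cos k₂*Real.sin k₂^3 + (832)*Real.cos k₁*Real.sin k₁*Real.cos k₂^2*Real.sin k₂ + (128)*Real.cos k₁*Real.sin k₁*Real.cos k₂^2*Real.sin k₂^3 + (512)*Real.cos k₁*Real.sin k₁*Real.cos k₂^3*Real.sin k₂ + (128)*Real.cos k₁*Real.sin k₁*Real.cos k₂^4*Real.sin k₂ + (128)*Real.cos k₁*Real.sin k₁^2*Real.sin k₂^2 + (64)*Real.cos k₁*Real.sin k₁^2*Real.sin k₂^4 + (192)*Real.cos k₁*Real.sin k₁^2*Real.cos k₂*Real.sin k₂^2 + (64)*Real.cos k₁*Real.sin k₁^2*Real.cos k₂^2*Real.sin k₂^2 + (192)*Real.cos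 k₁^2*Real.sin k₂^2 + (64)*Real.cos k₁^2*Real.sin k₂^4 + (256)*Real.cos k₁^2*Real.cos k₂ + (512)*Real.cos k₁^2*Real.cos k₂*Real.sin k₂^2 + (768)*Real.cos k₁^2*Real.cos k₂^2 + (384)*Real.cos k₁^2*Real.cos k₂^2*Real.sin k₂^2 + (832)*Real.cos k₁^2*Real.cos k₂^3 + (64)*Real.cos k₁^2*Real.cos k₂^3*Real.sin k₂^2 + (384)*Real.cos k₁^2*Real.cos k₂^4 + (64)*Real.cos k₁^2*Real.cos k₂^5 + (64)*Real.cos k₁^2*Real.sin k₁*Real.sin k₂ + (128)*Real.cos k₁^2*Real.sin k₁*Real.sin k₂^3 + (256)*Real.cos k₁^2*Real.sin k₁*Real.cos k₂*Real.sin k₂ + (128)*Real.cos k₁^2*Real.sin k₁*Real.cos k₂*Real.sin k₂^3 + (320)*Real.cos k₁^2*Real.sin k₁*Real.cos k₂^2*Real.sin k₂ + (128)*Real.cos k₁^2*Real.sin k₁*Real.cos k₂^3*Real.sin k₂ + (64)*Real.cos k₁^3*Real.sin k₂^2 + (64)*Real.cos k₁^3*Real.cos k₂ + (128)*Real.cos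 k₁^3*Real.cos k₂*Real.sin k₂^2 + (192)*Real.cos k₁^3*Real.cos k₂^2 + (64)*Real.cos k₁^3*Real.cos k₂^2*Real.sin k₂^2 + (192)*Real.cos k₁^3*Real.cos k₂^3 + (64)*Real.cos k₁^3*Real.cos k₂^4) * (Real.sin_sq_add_cos_sq k₁) + ((144) + (256)*Real.sin k₂^2 + (336)*Real.cos k₂ + (192)*Real.cos k₂*Real.sin k₂^2 + (256)*Real.cos k₂^2 + (64)*Real.cos k₂^3 + (336)*Real.sin k₁*Real.sin k₂ + (64)*Real.sin k₁*Real.sin k₂^3 + (512)*Real.sin k₁*Real.cos k₂*Real.sin k₂ + (192)*Real.sin k₁*Real.cos k₂^2*Real.sin k₂ + (480)*Real.cos k₁ + (256)*Real.cos k₁*Real.sin k₂^2 + (1040)*Real.cos k₁*Real.cos k₂ + (192)*Real.cos k₁*Real.cos k₂*Real.sin k₂^2 + (768)*Real.cos k₁*Real.cos k₂^2 + (192)*Real.cos k₁*Real.cos k₂^3 + (704)*Real.cos k₁*Real.sin k₁*Real.sin k₂ + (1024)*Real.cos k₁*Real.sin k₁*Real.cos k₂*Real.sin k₂ + (384)*Real.cos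 k₁*Real.sin k₁*Real.cos k₂^2*Real.sin k₂ + (592)*Real.cos k₁^2 + (-192)*Real.cos k₁^2*Real.sin k₂^2 + (1216)*Real.cos k₁^2*Real.cos k₂ + (-192)*Real.cos k₁^2*Real.cos k₂*Real.sin k₂^2 + (832)*Real.cos k₁^2*Real.cos k₂^2 + (192)*Real.cos k₁^2*Real.cos k₂^3 + (512)*Real.cos k₁^2*Real.sin k₁*Real.sin k₂ + (-64)*Real.cos k₁^2*Real.sin k₁*Real.sin k₂^3 + (640)*Real.cos k₁^2*Real.sin k₁*Real.cos k₂*Real.sin k₂ + (192)*Real.cos k₁^2*Real.sin k₁*Real.cos k₂^2*Real.sin k₂ + (320)*Real.cos k₁^3 + (-256)*Real.cos k₁^3*Real.sin k₂^2 + (640)*Real.cos k₁^3*Real.cos k₂ + (-192)*Real.cos k₁^3*Real.cos k₂*Real.sin k₂^2 + (384)*Real.cos k₁^3*Real.cos k₂^2 + (64)*Real.cos k₁^3*Real.cos k₂^3 + (128)*Real.cos k₁^3*Real.sin k₁*Real.sin k₂ + (128)*Real.cos k₁^3*Real.sin k₁*Real.cos k₂*Real.sin k₂ + (64)*Real.cos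 k₁^4 + (-64)*Real.cos k₁^4*Real.sin k₂^2 + (128)*Real.cos k₁^4*Real.cos k₂ + (64)*Real.cos k₁^4*Real.cos k₂^2) * (Real.sin_sq_add_cos_sq k₂)
  constructor
  · intro h0
    have : 16 * s ^ 4 * ((1 + Real.cos k₂ + Real.cos (k₁ - k₂)) * (1 + Real.cos k₁ + Real.cos (k₁ - k₂))
        * (1 + Real.cos k₁ + Real.cos k₂)) = 0 := by rw [← key, h0]; ring
    have hprod : (1 + Real.cos k₂ + Real.cos (k₁ - k₂)) * (1 + Real.cos k₁ + Real.cos (k₁ - k₂))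
        * (1 + Real.cos k₁ + Real.cos k₂) = 0 := by
      have h16 : (16 : ℝ) * s ^ 4 ≠ 0 := by positivity
      exact (mul_eq_zero.mp this).resolve_left h16
    rcases mul_eq_zero.mp hprod with h' | h'
    · rcases mul_eq_zero.mp h' with h'' | h''
      · exact Or.inl h''
      · exact Or.inr (Or.inl h'')
    · exact Or.inr (Or.inr h')
  · intro h0
    have hprod : (1 + Real.cos k₂ + Real.cos (k₁ - k₂)) * (1 + Real.cos k₁ + Real.cos (k₁ - k₂))
        * (1 + Real.cos k₁ + Real.cos k₂) = 0 := by
      rcases h0 with h' | h' | h' <;> rw [h'] <;> ring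
    have h16 : (16 : ℝ) * s ^ 8 ≠ 0 := by positivity
    have : 16 * s ^ 8 * (V11 * V22 - V12 ^ 2) = 0 := by rw [key, hprod]; ring
    exact (mul_eq_zero.mp this).resolve_left h16
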